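/- (Generalized Gronwall inequality, sublinear case) Let u, a, b be nonnegative continuous functions on [t₀, ∞), c ≥ 0, and 0 ≤ α < 1. If u(t) ≤ c + ∫_{t₀}^t (a(s)u(s) + b(s)u(s)^α) ds for all t ≥ t₀, then u(t) ≤ { c^{1−α} exp[(1−α)∫_{t₀}^t a(s)ds] + (1−α)∫_{t₀}^t b(s) exp[(1−α)∫_s^t a(r)dr] ds }^{1/(1−α)} for all t ≥ t₀. -/

import Mathlib

open intervalIntegral

private lemma gronwall_sublinear_aux (t₀ c α : ℝ) (u a b : ℝ → ℝ)
    (hu : Continuous u) (ha : Continuous a) (hb : Continuous b)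
    (hu0 : ∀ t, 0 ≤ u t) (ha0 : ∀ t, 0 ≤ a t) (hb0 : ∀ t, 0 ≤ b t)
    (hc : 0 < c) (hα0 : 0 ≤ α) (hα1 : α < 1)
    (hint : ∀ t ∈ Set.Ici t₀,
      u t ≤ c + ∫ s in t₀..t, (a s * u s + b s * u s ^ α)) :
    ∀ t ∈ Set.Ici t₀,
      u t ≤ (c ^ (1 - α) * Real.exp ((1 - α) * ∫ s in t₀..t, a s)
          + (1 - α) * ∫ s in t₀..t,
              b s * Real.exp ((1 - α) * ∫ r in s..t, a r)) ^ (1 / (1 - α)) := by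
  intro t ht
  have hβ : 0 < 1 - α := by linarith
  -- the function g and its primitive v
  set g : ℝ → ℝ := fun s => a s * u s + b s * u s ^ α with hg_def
  have hg_cont : Continuous g :=
    (ha.mul hu).add (hb.mul (hu.rpow_const fun x => Or.inr hα0))
  have hg0 : ∀ s, 0 ≤ g s := fun s =>
    add_nonneg (mul_nonneg (ha0 s) (hu0 s))
      (mul_nonneg (hb0 s) (Real.rpow_nonneg (hu0 s) α))
  set v : ℝ → ℝ := fun t => c + ∫ s in t₀..t, g s with hv_def
  have hv_deriv : ∀ x, HasDerivAt v (g x) x := fun x =>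
    (integral_hasDerivAt_right (hg_cont.intervalIntegrable _ _)
      hg_cont.aestronglyMeasurable.stronglyMeasurableAtFilter hg_cont.continuousAt).const_add c
  have hv_cont : Continuous v :=
    (Differentiable.continuous fun x => (hv_deriv x).differentiableAt)
  have hv_pos : ∀ x ∈ Set.Ici t₀, 0 < v x := by
    intro x hx
    have : 0 ≤ ∫ s in t₀..x, g s :=
      intervalIntegral.integral_nonneg hx fun s _ => hg0 s
    simp only [hv_def]; linarith
  have huv : ∀ x ∈ Set.Ici t₀, u x ≤ v x := hint
  -- the primitive A of a
  set A : ℝ → ℝ := fun t => ∫ s in t₀..t, a s with hA_def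
  have hA_deriv : ∀ x, HasDerivAt A (a x) x := fun x =>
    integral_hasDerivAt_right (ha.intervalIntegrable _ _)
      ha.aestronglyMeasurable.stronglyMeasurableAtFilter ha.continuousAt
  have hA_cont : Continuous A :=
    (Differentiable.continuous fun x => (hA_deriv x).differentiableAt)
  -- D = exp (-(1-α) A)
  set D : ℝ → ℝ := fun t => Real.exp (-(1 - α) * A t) with hD_def
  have hD_deriv : ∀ x, HasDerivAt D (D x * (-(1 - α) * a x)) x := fun x =>
    ((hA_deriv x).const_mul (-(1 - α))).exp
  have hD_cont : Continuous D := Real.continuous_exp.comp (continuous_const.mul hA_cont)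
  have hD_pos : ∀ x, 0 < D x := fun x => Real.exp_pos _
  -- w = v ^ (1-α)
  set w : ℝ → ℝ := fun t => v t ^ (1 - α) with hw_def
  have hw_cont : Continuous w := hv_cont.rpow_const fun x => Or.inr hβ.le
  have hw_deriv : ∀ x ∈ Set.Ici t₀,
      HasDerivAt w (g x * (1 - α) * v x ^ (1 - α - 1)) x := fun x hx =>
    (hv_deriv x).rpow_const (Or.inl (hv_pos x hx).ne')
  -- B
  set B : ℝ → ℝ := fun s => b s * D s with hB_def
  have hB_cont : Continuous B := hb.mul hD_cont
  have hI_deriv : ∀ x, HasDerivAt (fun t => ∫ s in t₀..t, B s) (B x) x := fun x =>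
    integral_hasDerivAt_right (hB_cont.intervalIntegrable _ _)
      hB_cont.aestronglyMeasurable.stronglyMeasurableAtFilter hB_cont.continuousAt
  have hI_cont : Continuous (fun t => ∫ s in t₀..t, B s) :=
    (Differentiable.continuous fun x => (hI_deriv x).differentiableAt)
  -- ψ
  set ψ : ℝ → ℝ := fun t => w t * D t - (1 - α) * ∫ s in t₀..t, B s with hψ_def
  have hψ_anti : AntitoneOn ψ (Set.Ici t₀) := by
    have hderiv : ∀ x ∈ Set.Ici t₀, HasDerivAt ψ
        ((g x * (1 - α) * v x ^ (1 - α - 1)) * D x + w x * (D x * (-(1 - α) * a x))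
          - (1 - α) * B x) x := fun x hx =>
      ((hw_deriv x hx).mul (hD_deriv x)).sub ((hI_deriv x).const_mul (1 - α))
    apply antitoneOn_of_deriv_nonpos (convex_Ici t₀)
    · exact ((hw_cont.mul hD_cont).sub (continuous_const.mul hI_cont)).continuousOn
    · intro x hx
      rw [interior_Ici] at hx
      exact ((hderiv x (Set.mem_Ici.mpr (le_of_lt (Set.mem_Ioi.mp hx)))).differentiableAt).differentiableWithinAt
    · intro x hx
      rw [interior_Ici] at hx
      have hx' : x ∈ Set.Ici t₀ := Set.mem_Ici.mpr (le_of_lt (Set.mem_Ioi.mp hx))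
      rw [(hderiv x hx').deriv]
      have hvpos := hv_pos x hx'
      -- key pointwise inequality
      have hvle : g x * v x ^ (1 - α - 1) ≤ a x * v x ^ (1 - α) + b x := by
        have h2 : u x ≤ v x := huv x hx'
        have h3 : u x ^ α ≤ v x ^ α := Real.rpow_le_rpow (hu0 x) h2 hα0
        have h1 : g x ≤ a x * v x + b x * v x ^ α := by
          simp only [hg_def]
          gcongr <;> [exact ha0 x; exact hb0 x]
        have hpow_pos : 0 < v x ^ (1 - α - 1) := Real.rpow_pos_of_pos hvpos _
        have e1 : v x * v x ^ (1 - α - 1) = v x ^ (1 - α) := by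
          rw [show v x * v x ^ (1 - α - 1) = v x ^ (1 : ℝ) * v x ^ (1 - α - 1) by
            rw [Real.rpow_one], ← Real.rpow_add hvpos,
            show (1 : ℝ) + (1 - α - 1) = 1 - α by ring]
        have e2 : v x ^ α * v x ^ (1 - α - 1) = 1 := by
          rw [← Real.rpow_add hvpos, show α + (1 - α - 1) = 0 by ring, Real.rpow_zero]
        calc g x * v x ^ (1 - α - 1)
            ≤ (a x * v x + b x * v x ^ α) * v x ^ (1 - α - 1) :=
              mul_le_mul_of_nonneg_right h1 hpow_pos.le
          _ = a x * (v x * v x ^ (1 - α - 1)) + b x * (v x ^ α * v x ^ (1 - α - 1)) := by ring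
          _ = a x * v x ^ (1 - α) + b x := by rw [e1, e2, mul_one]
      have hfactor : (g x * (1 - α) * v x ^ (1 - α - 1)) * D x
            + w x * (D x * (-(1 - α) * a x)) - (1 - α) * B x
          = ((1 - α) * D x) * (g x * v x ^ (1 - α - 1) - (a x * v x ^ (1 - α) + b x)) := by
        simp only [hw_def, hB_def]; ring
      rw [hfactor]
      exact mul_nonpos_of_nonneg_of_nonpos (by positivity) (sub_nonpos.2 hvle)
  -- evaluate ψ at t₀
  have hψt₀ : ψ t₀ = c ^ (1 - α) := by
    simp only [hψ_def, hw_def, hv_def, hD_def, hA_def, intervalIntegral.integral_same]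
    norm_num
  have hkey : ψ t ≤ c ^ (1 - α) := hψt₀ ▸ hψ_anti Set.self_mem_Ici ht ht
  -- deduce bound on w t
  have hwt : w t ≤ (c ^ (1 - α) + (1 - α) * ∫ s in t₀..t, B s) * Real.exp ((1 - α) * A t) := by
    have h1 : w t * D t ≤ c ^ (1 - α) + (1 - α) * ∫ s in t₀..t, B s := by
      have := hkey; simp only [hψ_def] at this; linarith
    have hDE : D t * Real.exp ((1 - α) * A t) = 1 := by
      rw [hD_def, ← Real.exp_add]; ring_nf; exact Real.exp_zero
    calc w t = w t * (D t * Real.exp ((1 - α) * A t)) := by rw [hDE, mul_one]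
      _ = (w t * D t) * Real.exp ((1 - α) * A t) := by ring
      _ ≤ (c ^ (1 - α) + (1 - α) * ∫ s in t₀..t, B s) * Real.exp ((1 - α) * A t) :=
          mul_le_mul_of_nonneg_right h1 (Real.exp_pos _).le
  -- identify the right-hand side
  have hRHS : (c ^ (1 - α) + (1 - α) * ∫ s in t₀..t, B s) * Real.exp ((1 - α) * A t)
      = c ^ (1 - α) * Real.exp ((1 - α) * ∫ s in t₀..t, a s)
        + (1 - α) * ∫ s in t₀..t, b s * Real.exp ((1 - α) * ∫ r in s..t, a r) := by
    have hcongr : ∫ s in t₀..t, b s * Real.exp ((1 - α) * ∫ r in s..t, a r)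
        = ∫ s in t₀..t, B s * Real.exp ((1 - α) * A t) := by
      apply intervalIntegral.integral_congr
      intro s hs
      rw [Set.uIcc_of_le ht] at hs
      have hsub : A t - A s = ∫ r in s..t, a r := by
        simp only [hA_def]
        exact intervalIntegral.integral_interval_sub_left (ha.intervalIntegrable _ _)
          (ha.intervalIntegrable _ _)
      simp only [hB_def, hD_def]
      rw [mul_assoc, ← Real.exp_add]
      congr 2
      rw [← hsub]; ring
    rw [hcongr, intervalIntegral.integral_mul_const]
    simp only [hA_def]
    ring
  rw [← hRHS]
  -- conclude
  have hvt : v t = w t ^ (1 / (1 - α)) := by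
    simp only [hw_def]
    rw [← Real.rpow_mul (hv_pos t ht).le, mul_one_div_cancel hβ.ne', Real.rpow_one]
  calc u t ≤ v t := huv t ht
    _ = w t ^ (1 / (1 - α)) := hvt
    _ ≤ ((c ^ (1 - α) + (1 - α) * ∫ s in t₀..t, B s) * Real.exp ((1 - α) * A t))
          ^ (1 / (1 - α)) :=
        Real.rpow_le_rpow (Real.rpow_nonneg (hv_pos t ht).le _) hwt (by positivity)

/-- generalized Gronwall inequality, sublinear case `0 ≤ α < 1`. -/
theorem stmt_9 (t₀ c α : ℝ) (u a b : ℝ → ℝ)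
    (hu : ContinuousOn u (Set.Ici t₀)) (ha : ContinuousOn a (Set.Ici t₀))
    (hb : ContinuousOn b (Set.Ici t₀))
    (hu0 : ∀ t ∈ Set.Ici t₀, 0 ≤ u t) (ha0 : ∀ t ∈ Set.Ici t₀, 0 ≤ a t)
    (hb0 : ∀ t ∈ Set.Ici t₀, 0 ≤ b t)
    (hc : 0 ≤ c) (hα0 : 0 ≤ α) (hα1 : α < 1)
    (hint : ∀ t ∈ Set.Ici t₀,
      u t ≤ c + ∫ s in t₀..t, (a s * u s + b s * u s ^ α)) :
    ∀ t ∈ Set.Ici t₀,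
      u t ≤ (c ^ (1 - α) * Real.exp ((1 - α) * ∫ s in t₀..t, a s)
          + (1 - α) * ∫ s in t₀..t,
              b s * Real.exp ((1 - α) * ∫ r in s..t, a r)) ^ (1 / (1 - α)) := by
  intro t ht
  have hβ : 0 < 1 - α := by linarith
  set E : ℝ := Real.exp ((1 - α) * ∫ s in t₀..t, a s) with hE_def
  set I : ℝ := ∫ s in t₀..t, b s * Real.exp ((1 - α) * ∫ r in s..t, a r) with hI_def
  -- extended functions
  set m : ℝ → ℝ := fun s => max s t₀ with hm_def
  have hm : Continuous m := continuous_id.max continuous_const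
  have hmem : ∀ s, m s ∈ Set.Ici t₀ := fun s => le_max_right s t₀
  have hmeq : ∀ s ∈ Set.Ici t₀, m s = s := fun s hs => max_eq_left hs
  have key : ∀ x, c < x → u t ≤ (x ^ (1 - α) * E + (1 - α) * I) ^ (1 / (1 - α)) := by
    intro x hx
    have hu' : Continuous (u ∘ m) := hu.comp_continuous hm hmem
    have ha' : Continuous (a ∘ m) := ha.comp_continuous hm hmem
    have hb' : Continuous (b ∘ m) := hb.comp_continuous hm hmem
    have hint' : ∀ τ ∈ Set.Ici t₀,
        (u ∘ m) τ ≤ x + ∫ s in t₀..τ,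
          ((a ∘ m) s * (u ∘ m) s + (b ∘ m) s * (u ∘ m) s ^ α) := by
      intro τ hτ
      have hEq : Set.EqOn
          (fun s => (a ∘ m) s * (u ∘ m) s + (b ∘ m) s * (u ∘ m) s ^ α)
          (fun s => a s * u s + b s * u s ^ α) (Set.uIcc t₀ τ) := by
        rw [Set.uIcc_of_le hτ]
        intro s hs
        simp only [Function.comp_apply, hmeq s hs.1]
      calc (u ∘ m) τ = u τ := by simp only [Function.comp_apply, hmeq τ hτ]
        _ ≤ c + ∫ s in t₀..τ, (a s * u s + b s * u s ^ α) := hint τ hτ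
        _ ≤ x + ∫ s in t₀..τ, (a s * u s + b s * u s ^ α) := by linarith
        _ = x + ∫ s in t₀..τ,
              ((a ∘ m) s * (u ∘ m) s + (b ∘ m) s * (u ∘ m) s ^ α) := by
            rw [intervalIntegral.integral_congr hEq]
    have H := gronwall_sublinear_aux t₀ x α (u ∘ m) (a ∘ m) (b ∘ m) hu' ha' hb'
      (fun s => hu0 _ (hmem s)) (fun s => ha0 _ (hmem s)) (fun s => hb0 _ (hmem s))
      (hc.trans_lt hx) hα0 hα1 hint' t ht
    have e1 : (∫ s in t₀..t, (a ∘ m) s) = ∫ s in t₀..t, a s := by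
      apply intervalIntegral.integral_congr
      rw [Set.uIcc_of_le ht]
      intro s hs
      simp only [Function.comp_apply, hmeq s hs.1]
    have e2 : (∫ s in t₀..t, (b ∘ m) s * Real.exp ((1 - α) * ∫ r in s..t, (a ∘ m) r)) = I := by
      rw [hI_def]
      apply intervalIntegral.integral_congr
      rw [Set.uIcc_of_le ht]
      intro s hs
      have e3 : (∫ r in s..t, a (m r)) = ∫ r in s..t, a r := by
        apply intervalIntegral.integral_congr
        rw [Set.uIcc_of_le hs.2]
        intro r hr
        simp only [hmeq r (hs.1.trans hr.1)]
      simp only [Function.comp_apply, hmeq s hs.1]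
      rw [e3]
    rw [e1, e2] at H
    have e4 : (u ∘ m) t = u t := by simp only [Function.comp_apply, hmeq t ht]
    rw [e4, ← hE_def] at H
    exact H
  -- pass to the limit x → c⁺
  have hF : ContinuousAt (fun x : ℝ => (x ^ (1 - α) * E + (1 - α) * I) ^ (1 / (1 - α))) c := by
    apply ContinuousAt.rpow_const
    · exact ((Real.continuousAt_rpow_const c (1 - α) (Or.inr hβ.le)).mul
        continuousAt_const).add continuousAt_const
    · exact Or.inr (le_of_lt (one_div_pos.mpr hβ))
  have hev : ∀ᶠ x in nhdsWithin c (Set.Ioi c),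
      u t ≤ (x ^ (1 - α) * E + (1 - α) * I) ^ (1 / (1 - α)) :=
    eventually_nhdsWithin_of_forall fun x hx => key x hx
  exact ge_of_tendsto (hF.tendsto.mono_left nhdsWithin_le_nhds) hev
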